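/- Let 𝔤 be a finite-dimensional Lie algebra over ℂ and (h,e,f) an sl2-triple in 𝔤. For every integer i, the eigenspaces 𝔤_i and 𝔤_{−i} of ad(h) have the same dimension. -/

import Mathlib

open Finset Module

attribute [local instance 100] LieRing.ofAssociativeRing

section ExpAux

variable {A : Type*} [Ring A] [Algebra ℂ A]

/-- Truncated exponential series. -/
noncomputable def expTrunc (X : A) (m : ℕ) : A :=
  ∑ k ∈ Finset.range m, ((k.factorial : ℂ))⁻¹ • X ^ k

lemma factorial_inv_succ (k : ℕ) :
    (((k+1).factorial : ℂ))⁻¹ * ((k : ℂ) + 1) = ((k.factorial : ℂ))⁻¹ := by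
  have h1 : ((k.factorial : ℂ)) ≠ 0 := Nat.cast_ne_zero.mpr k.factorial_ne_zero
  have h2 : ((k : ℂ) + 1) ≠ 0 := Nat.cast_add_one_ne_zero k
  rw [Nat.factorial_succ]
  push_cast
  field_simp

lemma factorial_inv_succ2 (j : ℕ) (c : ℂ) :
    (((j+2).factorial : ℂ))⁻¹ * (((((j:ℂ)+1) + 1) * ((j:ℂ)+1) / 2) * c)
      = (c / 2) * ((j.factorial : ℂ))⁻¹ := by
  have a := factorial_inv_succ (j+1)
  have b := factorial_inv_succ j
  push_cast at a
  linear_combination (((j:ℂ)+1) * c / 2) * a + (c / 2) * b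

lemma pow_swap {X Z : A} {c : ℂ} (hXZ : X * Z = Z * X + c • X) (i : ℕ) :
    X ^ i * Z = Z * X ^ i + ((i : ℂ) * c) • X ^ i := by
  induction i with
  | zero => simp
  | succ i ih =>
    have h1 : X ^ (i+1) * Z = X * (X ^ i * Z) := by rw [pow_succ', mul_assoc]
    rw [h1, ih, mul_add, mul_smul_comm, ← mul_assoc, hXZ, add_mul, smul_mul_assoc]
    simp only [mul_assoc, ← pow_succ']
    push_cast
    module

lemma pow_mul_key {X Y Z : A} {c : ℂ} (hXY : X * Y = Y * X + Z)
    (hXZ : X * Z = Z * X + c • X) (k : ℕ) :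
    X ^ (k+1) * Y = Y * X ^ (k+1) + ((k : ℂ) + 1) • (Z * X ^ k)
      + ((((k : ℂ) + 1) * (k : ℂ) / 2) * c) • X ^ k := by
  induction k with
  | zero => simpa using hXY
  | succ k ih =>
    have h1 : X ^ (k+1+1) * Y = X * (X ^ (k+1) * Y) := by rw [pow_succ', mul_assoc]
    rw [h1, ih, mul_add, mul_add, ← mul_assoc, hXY, mul_smul_comm, mul_smul_comm,
      ← mul_assoc, hXZ]
    simp only [add_mul, smul_mul_assoc, mul_assoc, ← pow_succ', smul_add, smul_smul]
    push_cast
    module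

lemma expTrunc_succ' (X : A) (m : ℕ) :
    expTrunc X (m+1) = (∑ k ∈ Finset.range m, (((k+1).factorial : ℂ))⁻¹ • X ^ (k+1)) + 1 := by
  rw [expTrunc, Finset.sum_range_succ' (fun k => ((k.factorial : ℂ))⁻¹ • X ^ k) m]
  simp

lemma mul_expTrunc (X Y : A) (m : ℕ) :
    Y * expTrunc X m = ∑ k ∈ Finset.range m, ((k.factorial : ℂ))⁻¹ • (Y * X ^ k) := by
  rw [expTrunc, Finset.mul_sum]
  exact Finset.sum_congr rfl fun k _ => (mul_smul_comm _ _ _)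

lemma expTrunc_mul_aux (X Y : A) (m : ℕ) :
    Y * expTrunc X (m+1)
      = ∑ k ∈ Finset.range m, (((k+1).factorial : ℂ))⁻¹ • (Y * X ^ (k+1)) + Y := by
  rw [expTrunc_succ', mul_add, mul_one, Finset.mul_sum]
  congr 1
  exact Finset.sum_congr rfl fun k _ => (mul_smul_comm _ _ _)

lemma x_mul_expTrunc (X : A) (m : ℕ) :
    X * expTrunc X m = ∑ k ∈ Finset.range m, ((k.factorial : ℂ))⁻¹ • X ^ (k+1) := by
  rw [mul_expTrunc]
  exact Finset.sum_congr rfl fun k _ => by rw [← pow_succ']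

/-- Main conjugation-type identity for the truncated exponential. -/
lemma expTrunc_mul {X Y Z : A} {c : ℂ} (hXY : X * Y = Y * X + Z)
    (hXZ : X * Z = Z * X + c • X) (m : ℕ) :
    expTrunc X (m+2) * Y = Y * expTrunc X (m+2) + Z * expTrunc X (m+1)
      + (c / 2) • (X * expTrunc X m) := by
  rw [expTrunc_succ' X (m+1), add_mul, one_mul, Finset.sum_mul]
  have hterm : ∀ k ∈ Finset.range (m+1),
      ((((k+1).factorial : ℂ))⁻¹ • X ^ (k+1)) * Y
        = (((k+1).factorial : ℂ))⁻¹ • (Y * X ^ (k+1))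
          + (((k.factorial : ℂ))⁻¹ • (Z * X ^ k)
          + ((((k+1).factorial : ℂ))⁻¹ * ((((k : ℂ) + 1) * (k : ℂ) / 2) * c)) • X ^ k) := by
    intro k _
    rw [smul_mul_assoc, pow_mul_key hXY hXZ k, smul_add, smul_add, smul_smul, smul_smul,
      factorial_inv_succ]
    abel
  rw [Finset.sum_congr rfl hterm, Finset.sum_add_distrib, Finset.sum_add_distrib]
  have hC : ∑ k ∈ Finset.range (m+1),
      ((((k+1).factorial : ℂ))⁻¹ * ((((k : ℂ) + 1) * (k : ℂ) / 2) * c)) • X ^ k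
        = (c / 2) • (X * expTrunc X m) := by
    rw [Finset.sum_range_succ'
      (fun k => ((((k+1).factorial : ℂ))⁻¹ * ((((k : ℂ) + 1) * (k : ℂ) / 2) * c)) • X ^ k) m,
      x_mul_expTrunc, Finset.smul_sum]
    have h0 : ((((0+1).factorial : ℂ))⁻¹ * ((((0:ℕ) : ℂ) + 1) * ((0:ℕ) : ℂ) / 2 * c)) • X ^ 0
        = 0 := by simp
    rw [h0, add_zero]
    refine Finset.sum_congr rfl fun j _ => ?_
    rw [smul_smul]
    congr 1
    push_cast
    linear_combination factorial_inv_succ2 j c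
  rw [hC, mul_expTrunc X Z (m+1), mul_add, mul_one, Finset.mul_sum]
  simp only [mul_smul_comm]
  abel

lemma expTrunc_stab {X : A} {n : ℕ} (hX : X ^ n = 0) {m : ℕ} (hnm : n ≤ m) :
    expTrunc X m = expTrunc X n := by
  rw [expTrunc, expTrunc]
  refine (Finset.sum_subset (by simpa using hnm) fun k _ hk => ?_).symm
  have hnk : n ≤ k := by simpa using hk
  have : X ^ k = 0 := by
    rw [← Nat.sub_add_cancel hnk, pow_add, hX, mul_zero]
  simp [this]

lemma commute_expTrunc (X : A) (m : ℕ) : Commute X (expTrunc X m) := by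
  refine Commute.sum_right _ _ _ fun k _ => ?_
  exact ((Commute.refl X).pow_right k).smul_right _

lemma expTrunc_isUnit (X : A) (hX : IsNilpotent X) (m : ℕ) :
    IsUnit (expTrunc X (m+1)) := by
  have hs : (∑ k ∈ Finset.range m, (((k+1).factorial : ℂ))⁻¹ • X ^ (k+1))
      = X * ∑ k ∈ Finset.range m, (((k+1).factorial : ℂ))⁻¹ • X ^ k := by
    rw [Finset.mul_sum]
    exact Finset.sum_congr rfl fun k _ => by rw [mul_smul_comm, ← pow_succ']
  have hnil : IsNilpotent
      (X * ∑ k ∈ Finset.range m, (((k+1).factorial : ℂ))⁻¹ • X ^ k) :=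
    Commute.isNilpotent_mul_right
      (Commute.sum_right _ _ _ fun k _ => ((Commute.refl X).pow_right k).smul_right _) hX
  rw [expTrunc_succ', hs]
  exact IsNilpotent.isUnit_add_right_of_commute hnil isUnit_one (Commute.one_right _)

end ExpAux

lemma expTrunc_conj {A : Type*} [Ring A] [Algebra ℂ A] {X Y Z : A} {c : ℂ}
    (hXY : X * Y = Y * X + Z) (hXZ : X * Z = Z * X + c • X)
    {n : ℕ} (hX : X ^ n = 0) :
    expTrunc X (n+2) * Y = (Y + Z + (c / 2) • X) * expTrunc X (n+2) := by
  have h2 : expTrunc X (n+2) = expTrunc X n := expTrunc_stab hX (by omega)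
  have h1 : expTrunc X (n+1) = expTrunc X n := expTrunc_stab hX (by omega)
  rw [expTrunc_mul hXY hXZ n, h1, h2, add_mul, add_mul, smul_mul_assoc]

section Main

variable {L : Type*} [LieRing L] [LieAlgebra ℂ L] [FiniteDimensional ℂ L]

lemma isNilpotent_of_rel (H X : Module.End ℂ L) (c : ℂ) (hc : c ≠ 0)
    (rel : X * H = H * X + c • X) : IsNilpotent X := by
  by_contra hcon
  have hpow : ∀ k : ℕ, X ^ k ≠ 0 := fun k hk => hcon ⟨k, hk⟩
  set D := LieAlgebra.ad ℂ (Module.End ℂ L) H with hD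
  have hev : ∀ k : ℕ, D.HasEigenvector ((k : ℂ) * (-c)) (X ^ k) := by
    intro k
    refine ⟨Module.End.mem_eigenspace_iff.mpr ?_, hpow k⟩
    have hps := pow_swap rel k
    rw [hD, LieAlgebra.ad_apply, Ring.lie_def, hps]
    module
  have inj : Function.Injective (fun k : ℕ => (k : ℂ) * (-c)) := by
    intro a b hab
    exact Nat.cast_injective (mul_right_cancel₀ (neg_ne_zero.mpr hc) hab)
  have lin := Module.End.eigenvectors_linearIndependent' D _ inj _ hev
  have hnt : Nontrivial (Module.End ℂ L) := nontrivial_of_ne X 0 (by simpa using hpow 1)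
  have h0 := lin.finrank_eq_zero_of_infinite
  have hpos : 0 < Module.finrank ℂ (Module.End ℂ L) := Module.finrank_pos
  omega

lemma finrank_eig_le (H ω : Module.End ℂ L) (hu : IsUnit ω)
    (hcomm : ω * H = (-H) * ω) (c : ℂ) :
    finrank ℂ (Module.End.eigenspace H c) ≤ finrank ℂ (Module.End.eigenspace H (-c)) := by
  obtain ⟨u, rfl⟩ := hu
  have h1 : ((u : Module.End ℂ L)) ∘ₗ ((u⁻¹ : (Module.End ℂ L)ˣ) : Module.End ℂ L)
      = LinearMap.id := u.mul_inv
  have h2 : (((u⁻¹ : (Module.End ℂ L)ˣ) : Module.End ℂ L)) ∘ₗ ((u : Module.End ℂ L))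
      = LinearMap.id := u.inv_mul
  set eqv : L ≃ₗ[ℂ] L := LinearEquiv.ofLinear (u : Module.End ℂ L) _ h1 h2 with heqv
  have hmap : Submodule.map (eqv : L →ₗ[ℂ] L) (Module.End.eigenspace H c)
      ≤ Module.End.eigenspace H (-c) := by
    rintro _ ⟨v, hv, rfl⟩
    rw [SetLike.mem_coe, Module.End.mem_eigenspace_iff] at hv
    rw [Module.End.mem_eigenspace_iff]
    have hcv := LinearMap.congr_fun hcomm v
    rw [Module.End.mul_apply, Module.End.mul_apply, hv, map_smul,
      LinearMap.neg_apply] at hcv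
    show H ((u : Module.End ℂ L) v) = (-c) • ((u : Module.End ℂ L) v)
    rw [neg_smul, hcv, neg_neg]
  calc finrank ℂ (Module.End.eigenspace H c)
      = finrank ℂ (Submodule.map (eqv : L →ₗ[ℂ] L) (Module.End.eigenspace H c)) :=
        (LinearEquiv.finrank_map_eq eqv _).symm
    _ ≤ finrank ℂ (Module.End.eigenspace H (-c)) := Submodule.finrank_mono hmap

end Main

private lemma pow_zero_of_le' {A : Type*} [MonoidWithZero A] {X : A} {n m : ℕ}
    (hX : X ^ n = (0:A)) (hnm : n ≤ m) : X ^ m = 0 := by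
  rw [← Nat.sub_add_cancel hnm, pow_add, hX, mul_zero]

/-- For an sl2-triple `(h, e, f)` in a finite-dimensional complex Lie algebra,
the eigenspaces `𝔤_i` and `𝔤_{-i}` of `ad h` have the same dimension. -/
theorem sl2_dim_eigenspace_symmetric
    (L : Type*) [LieRing L] [LieAlgebra ℂ L] [FiniteDimensional ℂ L]
    (h e f : L) (he : e ≠ 0)
    (hhe : ⁅h, e⁆ = (2 : ℂ) • e) (hhf : ⁅h, f⁆ = (-2 : ℂ) • f) (hef : ⁅e, f⁆ = h)
    (i : ℤ) :
    Module.finrank ℂ ↥(Module.End.eigenspace (LieAlgebra.ad ℂ L h) (i : ℂ)) =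
      Module.finrank ℂ ↥(Module.End.eigenspace (LieAlgebra.ad ℂ L h) ((-i : ℤ) : ℂ)) := by
  set H : Module.End ℂ L := LieAlgebra.ad ℂ L h with hH
  set E : Module.End ℂ L := LieAlgebra.ad ℂ L e with hE
  set F : Module.End ℂ L := LieAlgebra.ad ℂ L f with hF
  -- basic commutator relations
  have rel_he : H * E - E * H = (2 : ℂ) • E := by
    have := (LieAlgebra.ad ℂ L).map_lie h e
    rw [hhe, map_smul, Ring.lie_def] at this
    rw [← this]
  have rel_hf : H * F - F * H = (-2 : ℂ) • F := by
    have := (LieAlgebra.ad ℂ L).map_lie h f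
    rw [hhf, map_smul, Ring.lie_def] at this
    rw [← this]
  have rel_ef : E * F - F * E = H := by
    have := (LieAlgebra.ad ℂ L).map_lie e f
    rw [hef, Ring.lie_def] at this
    rw [← this]
  set G : Module.End ℂ L := -F with hG
  -- relations in "X*Y = Y*X + Z" form
  have hEH : E * H = H * E + (-2 : ℂ) • E := by
    linear_combination (norm := module) -rel_he
  have hEF : E * F = F * E + H := by
    linear_combination (norm := module) rel_ef
  have hGH : G * H = H * G + (2 : ℂ) • G := by
    rw [hG]
    simp only [neg_mul, mul_neg, smul_neg]
    linear_combination (norm := module) rel_hf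
  have hGE : G * E = E * G + H := by
    rw [hG]
    simp only [neg_mul, mul_neg]
    linear_combination (norm := module) rel_ef
  -- auxiliary trivial relations for the conjugation lemma
  have hEZ : E * ((-2 : ℂ) • E) = ((-2 : ℂ) • E) * E + (0 : ℂ) • E := by
    rw [mul_smul_comm, smul_mul_assoc, zero_smul, add_zero]
  have hGZ : G * ((2 : ℂ) • G) = ((2 : ℂ) • G) * G + (0 : ℂ) • G := by
    rw [mul_smul_comm, smul_mul_assoc, zero_smul, add_zero]
  -- nilpotency
  have nE : IsNilpotent E := isNilpotent_of_rel H E (-2) (by norm_num) hEH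
  have nG : IsNilpotent G := isNilpotent_of_rel H G 2 (by norm_num) hGH
  obtain ⟨ne', hEn⟩ := nE
  obtain ⟨ng', hGn⟩ := nG
  set m : ℕ := max ne' ng' with hm
  have hEm : E ^ m = 0 := pow_zero_of_le' hEn (le_max_left _ _)
  have hGm : G ^ m = 0 := pow_zero_of_le' hGn (le_max_right _ _)
  set S1 : Module.End ℂ L := expTrunc E (m+2) with hS1
  set S2 : Module.End ℂ L := expTrunc G (m+2) with hS2
  -- conjugation identities
  have c1 : S1 * H = (H + (-2 : ℂ) • E) * S1 := by
    have := expTrunc_conj hEH hEZ hEm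
    simpa using this
  have c2 : S2 * H = (H + (2 : ℂ) • G) * S2 := by
    have := expTrunc_conj hGH hGZ hGm
    simpa using this
  have c4 : S2 * E = (E + H + G) * S2 := by
    have := expTrunc_conj hGE hGH hGm
    rw [show ((2:ℂ)/2) = 1 by norm_num, one_smul] at this
    exact this
  have commE : S1 * E = E * S1 := ((commute_expTrunc E (m+2)).symm).eq
  -- the Weyl element
  set ω : Module.End ℂ L := S1 * S2 * S1 with hω
  have hunit : IsUnit ω :=
    ((expTrunc_isUnit E (by exact ⟨ne', hEn⟩) (m+1)).mul
      (expTrunc_isUnit G (by exact ⟨ng', hGn⟩) (m+1))).mul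
      (expTrunc_isUnit E (by exact ⟨ne', hEn⟩) (m+1))
  have step2 : S2 * (H + (-2 : ℂ) • E) = ((-H) + (-2 : ℂ) • E) * S2 := by
    rw [mul_add, mul_smul_comm, c2, c4]
    simp only [add_mul, neg_mul, smul_mul_assoc, smul_add]
    try module
  have step3 : S1 * ((-H) + (-2 : ℂ) • E) = (-H) * S1 := by
    rw [mul_add, mul_smul_comm, mul_neg, c1, commE]
    simp only [add_mul, neg_mul, smul_mul_assoc, neg_add]
    try module
  have hωH : ω * H = (-H) * ω := by
    rw [hω, mul_assoc (S1 * S2) S1 H, c1,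
      show S1 * S2 * ((H + (-2 : ℂ) • E) * S1) = S1 * (S2 * (H + (-2 : ℂ) • E)) * S1 by
        rw [mul_assoc, mul_assoc, mul_assoc],
      step2,
      show S1 * (((-H) + (-2 : ℂ) • E) * S2) * S1 = (S1 * ((-H) + (-2 : ℂ) • E)) * S2 * S1 by
        rw [← mul_assoc S1 _ S2],
      step3, mul_assoc, mul_assoc, mul_assoc]
  have key : ∀ c : ℂ, finrank ℂ (Module.End.eigenspace H c)
      ≤ finrank ℂ (Module.End.eigenspace H (-c)) :=
    finrank_eig_le H ω hunit hωH
  have h1 := key (i : ℂ)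
  have h2 := key (-(i : ℂ))
  rw [neg_neg] at h2
  have hcast : ((-i : ℤ) : ℂ) = -(i : ℂ) := by push_cast; ring
  rw [hcast]
  exact le_antisymm h1 h2
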